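/- Let n ≥ 1 and let W be an n×n real symmetric matrix with nonnegative entries and zero diagonal such that the weighted graph determined by W is connected, with weighted graph Laplacian L(W). Let C be an n×n diagonal matrix with nonnegative diagonal entries, let α ≥ 0 be real, and suppose either α > 0 or some diagonal entry of C is strictly positive. Then the matrix M = −(L(W) + C + α·I) is invertible and every eigenvalue of M is strictly negative (equivalently, −M is symmetric positive definite). -/

import Mathlib

open scoped Matrix

noncomputable section

/-- The weighted graph determined by a symmetric nonnegative weight matrix `W` is
connected: any two distinct vertices are joined by a path of positive-weight edges. -/
def WeightConnected {n : ℕ} (W : Matrix (Fin n) (Fin n) ℝ) : Prop :=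
  ∀ i j : Fin n, i ≠ j → ∃ (k : ℕ) (v : Fin (k + 1) → Fin n),
    v 0 = i ∧ v (Fin.last k) = j ∧ ∀ t : Fin k, 0 < W (t.castSucc |> v) (t.succ |> v)

/-- The weighted graph Laplacian `L(W) = diag(d) − W`, `d_i = Σ_j W_{ij}`. -/
def graphLaplacian {n : ℕ} (W : Matrix (Fin n) (Fin n) ℝ) : Matrix (Fin n) (Fin n) ℝ :=
  Matrix.diagonal (fun i => ∑ j, W i j) - W

lemma lap_quad_aux {n : ℕ} (W : Matrix (Fin n) (Fin n) ℝ) (v : Fin n → ℝ) :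
    v ⬝ᵥ (graphLaplacian W).mulVec v
      = (∑ i, ∑ j, W i j * v i ^ 2) - ∑ i, ∑ j, W i j * (v i * v j) := by
  simp only [graphLaplacian, dotProduct, Matrix.mulVec, Matrix.sub_apply,
    Matrix.diagonal_apply, sub_mul, ite_mul, zero_mul, Finset.sum_sub_distrib,
    Finset.sum_ite_eq, Finset.mem_univ, if_true]
  rw [← Finset.sum_sub_distrib]
  refine Finset.sum_congr rfl fun i _ => ?_
  rw [mul_sub]
  congr 1
  · rw [mul_comm, mul_assoc, Finset.sum_mul]
    exact Finset.sum_congr rfl fun j _ => by ring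
  · rw [Finset.mul_sum]; exact Finset.sum_congr rfl fun j _ => by ring

lemma lap_quad {n : ℕ} (W : Matrix (Fin n) (Fin n) ℝ) (hsymm : W.IsSymm) (v : Fin n → ℝ) :
    2 * (v ⬝ᵥ (graphLaplacian W).mulVec v) = ∑ i, ∑ j, W i j * (v i - v j)^2 := by
  have hswap : (∑ i, ∑ j, W i j * v j ^ 2) = ∑ i, ∑ j, W i j * v i ^ 2 := by
    rw [Finset.sum_comm]
    exact Finset.sum_congr rfl fun j _ => Finset.sum_congr rfl fun i _ => by
      rw [hsymm.apply i j]
  rw [lap_quad_aux]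
  calc 2 * ((∑ i, ∑ j, W i j * v i ^ 2) - ∑ i, ∑ j, W i j * (v i * v j))
      = (∑ i, ∑ j, W i j * v i ^ 2) + (∑ i, ∑ j, W i j * v j ^ 2)
        - 2 * ∑ i, ∑ j, W i j * (v i * v j) := by rw [hswap]; ring
    _ = ∑ i, ∑ j, W i j * (v i - v j)^2 := by
        rw [← Finset.sum_add_distrib, Finset.mul_sum, ← Finset.sum_sub_distrib]
        refine Finset.sum_congr rfl fun i _ => ?_
        rw [← Finset.sum_add_distrib, Finset.mul_sum, ← Finset.sum_sub_distrib]
        exact Finset.sum_congr rfl fun j _ => by ring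

/-- For a connected weighted graph on `n ≥ 1` vertices with Laplacian
`L(W)`, a nonnegative diagonal matrix `C`, and `α ≥ 0` with either `α > 0` or some
diagonal entry of `C` strictly positive, the matrix `M = −(L(W) + C + α·I)` is
invertible with all eigenvalues strictly negative; equivalently `−M` is symmetric
positive definite. -/
theorem neg_laplacian_system_invertible (n : ℕ) (hn : 1 ≤ n)
    (W : Matrix (Fin n) (Fin n) ℝ) (hsymm : W.IsSymm)
    (hnonneg : ∀ i j, 0 ≤ W i j) (hdiag : ∀ i, W i i = 0)
    (hconn : WeightConnected W)
    (cdiag : Fin n → ℝ) (hc : ∀ i, 0 ≤ cdiag i) (α : ℝ) (hα : 0 ≤ α)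
    (hpos : 0 < α ∨ ∃ i, 0 < cdiag i)
    (M : Matrix (Fin n) (Fin n) ℝ)
    (hM : M = -(graphLaplacian W + Matrix.diagonal cdiag + α • (1 : Matrix (Fin n) (Fin n) ℝ))) :
    IsUnit M ∧
      (∀ (μ : ℝ) (v : Fin n → ℝ), v ≠ 0 → M.mulVec v = μ • v → μ < 0) ∧
      (-M).PosDef := by
  set A : Matrix (Fin n) (Fin n) ℝ :=
    graphLaplacian W + Matrix.diagonal cdiag + α • (1 : Matrix (Fin n) (Fin n) ℝ) with hA
  -- quadratic form of A
  have hquad : ∀ v : Fin n → ℝ, v ⬝ᵥ A.mulVec v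
      = v ⬝ᵥ (graphLaplacian W).mulVec v + ∑ i, (cdiag i + α) * v i ^ 2 := by
    intro v
    rw [hA, Matrix.add_mulVec, Matrix.add_mulVec, dotProduct_add,
      dotProduct_add, add_assoc]
    congr 1
    have h1 : v ⬝ᵥ (Matrix.diagonal cdiag).mulVec v = ∑ i, cdiag i * v i ^ 2 := by
      simp only [dotProduct, Matrix.mulVec_diagonal]
      exact Finset.sum_congr rfl fun i _ => by ring
    have h2 : v ⬝ᵥ (α • (1 : Matrix (Fin n) (Fin n) ℝ)).mulVec v = ∑ i, α * v i ^ 2 := by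
      rw [Matrix.smul_mulVec, Matrix.one_mulVec]
      simp only [dotProduct, Pi.smul_apply, smul_eq_mul]
      exact Finset.sum_congr rfl fun i _ => by ring
    rw [h1, h2, ← Finset.sum_add_distrib]
    exact Finset.sum_congr rfl fun i _ => by ring
  -- nonnegativity of the Laplacian part
  have hLnonneg : ∀ v : Fin n → ℝ, 0 ≤ v ⬝ᵥ (graphLaplacian W).mulVec v := by
    intro v
    have h2 : 0 ≤ 2 * (v ⬝ᵥ (graphLaplacian W).mulVec v) := by
      rw [lap_quad W hsymm v]
      exact Finset.sum_nonneg fun i _ => Finset.sum_nonneg fun j _ =>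
        mul_nonneg (hnonneg i j) (sq_nonneg _)
    linarith
  have hCnonneg : ∀ v : Fin n → ℝ, 0 ≤ ∑ i, (cdiag i + α) * v i ^ 2 := fun v =>
    Finset.sum_nonneg fun i _ => mul_nonneg (by linarith [hc i]) (sq_nonneg _)
  -- A is positive definite
  have hherm : A.IsHermitian := by
    have hW : (graphLaplacian W).IsSymm := by
      unfold graphLaplacian
      exact (Matrix.isSymm_diagonal _).sub hsymm
    have hAsymm : A.IsSymm := ((hW.add (Matrix.isSymm_diagonal _)).add
      ((Matrix.isSymm_one).smul α))
    rw [Matrix.IsHermitian, Matrix.conjTranspose]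
    ext i j; simpa using congrFun (congrFun hAsymm i) j
  have hposdef : A.PosDef := by
    refine Matrix.PosDef.of_dotProduct_mulVec_pos hherm fun x hx => ?_
    have hstar : star x = x := by ext i; simp
    rw [hstar]
    rcases lt_or_eq_of_le (add_nonneg (hLnonneg x) (hCnonneg x)) with h | h
    · rw [hquad x] at *; linarith [hquad x]
    · exfalso
      -- both parts are zero
      have hL0 : x ⬝ᵥ (graphLaplacian W).mulVec x = 0 := by
        have := hCnonneg x; have := hLnonneg x; linarith
      have hC0 : ∑ i, (cdiag i + α) * x i ^ 2 = 0 := by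
        have := hLnonneg x; linarith
      -- each term of the Laplacian sum is zero
      have hsum0 : ∑ i, ∑ j, W i j * (x i - x j) ^ 2 = 0 := by
        rw [← lap_quad W hsymm x, hL0]; ring
      have hterm : ∀ i j, W i j * (x i - x j) ^ 2 = 0 := by
        have h1 := (Finset.sum_eq_zero_iff_of_nonneg (fun i _ =>
          Finset.sum_nonneg fun j _ =>
            mul_nonneg (hnonneg i j) (sq_nonneg _))).mp hsum0
        intro i j
        have h2 := (Finset.sum_eq_zero_iff_of_nonneg (fun j _ =>
          mul_nonneg (hnonneg i j) (sq_nonneg _))).mp (h1 i (Finset.mem_univ i))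
        exact h2 j (Finset.mem_univ j)
      have hconst : ∀ i j, 0 < W i j → x i = x j := by
        intro i j hij
        have := hterm i j
        have h2 : (x i - x j) ^ 2 = 0 := by
          rcases mul_eq_zero.mp this with h | h
          · exact absurd h (ne_of_gt hij)
          · exact h
        have := pow_eq_zero_iff (n := 2) (by norm_num) |>.mp h2
        linarith [sub_eq_zero.mp this]
      have hCterm : ∀ i, (cdiag i + α) * x i ^ 2 = 0 := fun i =>
        (Finset.sum_eq_zero_iff_of_nonneg (fun i _ =>
          mul_nonneg (by linarith [hc i]) (sq_nonneg _))).mp hC0 i (Finset.mem_univ i)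
      -- some coordinate is nonzero
      obtain ⟨i0, hi0⟩ := Function.ne_iff.mp hx
      have hxi0 : x i0 ≠ 0 := hi0
      have hsq : 0 < x i0 ^ 2 := by positivity
      have hci0 : cdiag i0 + α = 0 := by
        by_contra h
        have := hCterm i0
        rcases mul_eq_zero.mp this with h' | h'
        · exact h h'
        · exact hxi0 (by nlinarith [sq_nonneg (x i0)])
      have hα0 : α = 0 := by linarith [hc i0]
      obtain ⟨j, hj⟩ : ∃ j, 0 < cdiag j := by
        rcases hpos with h | h
        · exact absurd hα0 (ne_of_gt h)
        · exact h
      have hxj : x j = 0 := by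
        have := hCterm j
        have hcj : 0 < cdiag j + α := by linarith
        have h2 : x j ^ 2 = 0 := by
          rcases mul_eq_zero.mp this with h' | h'
          · exact absurd h' (ne_of_gt hcj)
          · exact h'
        nlinarith [sq_nonneg (x j)]
      have hne : i0 ≠ j := by
        intro h; rw [h] at hxi0; exact hxi0 hxj
      obtain ⟨k, p, hp0, hpl, hpe⟩ := hconn i0 j hne
      have hall : ∀ t : Fin (k + 1), x (p t) = x (p 0) := by
        intro t
        induction t using Fin.induction with
        | zero => rfl
        | succ t ih => rw [← ih]; exact (hconst _ _ (hpe t)).symm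
      have : x j = x i0 := by rw [← hpl, ← hp0]; exact hall (Fin.last k)
      rw [hxj] at this
      exact hxi0 this.symm
  -- assemble the three conclusions
  have hMA : -M = A := by rw [hM, neg_neg]
  refine ⟨?_, ?_, by rw [hMA]; exact hposdef⟩
  · have hdet : A.det ≠ 0 := ne_of_gt hposdef.det_pos
    have : M.det ≠ 0 := by
      have : M = -A := by rw [hM]
      rw [this, Matrix.det_neg]
      simp only [ne_eq, mul_eq_zero, not_or]
      exact ⟨pow_ne_zero _ (by norm_num), hdet⟩
    rw [Matrix.isUnit_iff_isUnit_det]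
    exact isUnit_iff_ne_zero.mpr this
  · intro μ v hv heig
    have h1 : 0 < star v ⬝ᵥ A.mulVec v := hposdef.dotProduct_mulVec_pos hv
    have hstar : star v = v := by ext i; simp
    rw [hstar] at h1
    have hAv : A.mulVec v = -(μ • v) := by
      rw [← hMA, Matrix.neg_mulVec, heig]
    rw [hAv] at h1
    have h2 : v ⬝ᵥ -(μ • v) = -(μ * (v ⬝ᵥ v)) := by
      rw [dotProduct_neg, dotProduct_smul]; simp
    rw [h2] at h1
    have hvv : 0 < v ⬝ᵥ v := by
      have hn0 : 0 ≤ v ⬝ᵥ v := Finset.sum_nonneg fun i _ => mul_self_nonneg (v i)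
      rcases hn0.lt_or_eq with h | h
      · exact h
      · exact absurd ((dotProduct_self_eq_zero).mp h.symm) hv
    nlinarith
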